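/- arXiv:1912.10410 — 6 statements merged into one kernel-verified Lean document; each statement's English description precedes it below -/
import Mathlib

section
/- If s(k) is the unique power series solution of k²s⁴ − 2k²s³ + 2s − 1 = 0 with s(0) = 1/2, and s(k) = ∑ₙ sₙ kⁿ, then the coefficients satisfy the linear recurrence (3n+10)(3n+14)(n+2)·s_{n+4} + n(3n+2)(3n+4)·sₙ = 2(9n³ + 54n² + 106n + 70)·s_{n+2} for all n ≥ 0. -/
open PowerSeries

lemma D_ofNat (n : ℕ) [n.AtLeastTwo] :
    (d⁄dX ℝ) (no_index (OfNat.ofNat n) : ℝ⟦X⟧) = 0 := by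
  rw [show (OfNat.ofNat n:ℝ⟦X⟧) = ((OfNat.ofNat n:ℕ):ℝ⟦X⟧) by norm_num]
  exact Derivation.map_natCast _ _

set_option maxHeartbeats 4000000 in
/-- The coefficients of the power series solution of
`k²s⁴ − 2k²s³ + 2s − 1 = 0` with `s(0) = 1/2` satisfy the linear recurrence
`(3n+10)(3n+14)(n+2) s_{n+4} + n(3n+2)(3n+4) s_n = 2(9n³+54n²+106n+70) s_{n+2}`. -/
theorem stmt1 (S : PowerSeries ℝ)
    (h0 : PowerSeries.constantCoeff S = 1/2)
    (heq : X^2 * S^4 - 2 * X^2 * S^3 + 2 * S - 1 = 0) :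
    ∀ n : ℕ,
      ((3*n+10) * (3*n+14) * (n+2) : ℝ) * PowerSeries.coeff (n+4) S
        + (n * (3*n+2) * (3*n+4) : ℝ) * PowerSeries.coeff n S
      = 2 * (9*(n:ℝ)^3 + 54*(n:ℝ)^2 + 106*n + 70) * PowerSeries.coeff (n+2) S := by
  have e1 := congrArg (d⁄dX ℝ) heq
  simp only [Derivation.leibniz, Derivation.leibniz_pow, PowerSeries.derivative_X,
    smul_eq_mul, nsmul_eq_mul, map_add, map_sub, map_zero, Derivation.map_one_eq_zero,
    D_ofNat, Nat.cast_ofNat, mul_zero, zero_mul, add_zero, zero_add, mul_one, pow_one] at e1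
  have hP1 : 2*(d⁄dX ℝ S) - 4*X*S^3 - 6*X^2*S^2*(d⁄dX ℝ S) + 2*X*S^4 + 4*X^2*S^3*(d⁄dX ℝ S) = 0 := by linear_combination e1
  have e2 := congrArg (d⁄dX ℝ) hP1
  simp only [Derivation.leibniz, Derivation.leibniz_pow, PowerSeries.derivative_X,
    smul_eq_mul, nsmul_eq_mul, map_add, map_sub, map_zero, Derivation.map_one_eq_zero,
    D_ofNat, Nat.cast_ofNat, mul_zero, zero_mul, add_zero, zero_add, mul_one, pow_one] at e2
  have hP2 : 2*(d⁄dX ℝ (d⁄dX ℝ S)) - 4*S^3 - 24*X*S^2*(d⁄dX ℝ S) - 12*X^2*S*(d⁄dX ℝ S)^2 - 6*X^2*S^2*(d⁄dX ℝ (d⁄dX ℝ S)) + 2*S^4 + 16*X*S^3*(d⁄dX ℝ S) + 12*X^2*S^2*(d⁄dX ℝ S)^2 + 4*X^2*S^3*(d⁄dX ℝ (d⁄dX ℝ S)) = 0 := by linear_combination e2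
  have e3 := congrArg (d⁄dX ℝ) hP2
  simp only [Derivation.leibniz, Derivation.leibniz_pow, PowerSeries.derivative_X,
    smul_eq_mul, nsmul_eq_mul, map_add, map_sub, map_zero, Derivation.map_one_eq_zero,
    D_ofNat, Nat.cast_ofNat, mul_zero, zero_mul, add_zero, zero_add, mul_one, pow_one] at e3
  have hP3 : 2*(d⁄dX ℝ (d⁄dX ℝ (d⁄dX ℝ S))) - 36*S^2*(d⁄dX ℝ S) - 72*X*S*(d⁄dX ℝ S)^2 - 36*X*S^2*(d⁄dX ℝ (d⁄dX ℝ S)) - 12*X^2*(d⁄dX ℝ S)^3 - 36*X^2*S*(d⁄dX ℝ S)*(d⁄dX ℝ (d⁄dX ℝ S)) - 6*X^2*S^2*(d⁄dX ℝ (d⁄dX ℝ (d⁄dX ℝ S))) + 24*S^3*(d⁄dX ℝ S) + 72*X*S^2*(d⁄dX ℝ S)^2 + 24*X*S^3*(d⁄dX ℝ (d⁄dX ℝ S)) + 24*X^2*S*(d⁄dX ℝ S)^3 + 36*X^2*S^2*(d⁄dX ℝ S)*(d⁄dX ℝ (d⁄dX ℝ S)) + 4*X^2*S^3*(d⁄dX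 ℝ (d⁄dX ℝ (d⁄dX ℝ S))) = 0 := by linear_combination e3
  have hbig : (2 - 6*X^2*S^2 + 4*X^2*S^3)^5 * (C (R := ℝ) 9 * ((d⁄dX ℝ (d⁄dX ℝ (d⁄dX ℝ S))) * X^7) - C (R := ℝ) 18 * ((d⁄dX ℝ (d⁄dX ℝ (d⁄dX ℝ S))) * X^5) + C (R := ℝ) 9 * ((d⁄dX ℝ (d⁄dX ℝ (d⁄dX ℝ S))) * X^3) + C (R := ℝ) 45 * ((d⁄dX ℝ (d⁄dX ℝ S)) * X^6) - C (R := ℝ) 54 * ((d⁄dX ℝ (d⁄dX ℝ S)) * X^4) + C (R := ℝ) 9 * ((d⁄dX ℝ (d⁄dX ℝ S)) * X^2) + C (R := ℝ) 35 * ((d⁄dX ℝ S) * X^5) - C (R := ℝ) 14 * ((d⁄dX ℝ S) * X^3) - C (R := ℝ) 13 * ((d⁄dX ℝ S) * X^1) - C (R := ℝ) 4 * (S * X^2) + C (R := ℝ) 8 * (S * X^0) + C (R := ℝ) 2 * X^2 - C (R := ℝ) 4) = 0 := by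
    simp only [map_ofNat]
    linear_combination (128 - 64*X^2 - 1920*X^2*S^2 + 960*X^4*S^2 + 1280*X^2*S^3 + 3840*X^4*S^3 - 5120*X^6*S^3 + 18240*X^4*S^4 - 13440*X^6*S^4 - 28800*X^4*S^5 + 21120*X^6*S^5 + 6144*X^8*S^5 + 9600*X^4*S^6 - 52800*X^6*S^6 + 32640*X^8*S^6 + 84480*X^6*S^7 - 76800*X^8*S^7 - 54720*X^6*S^8 + 84480*X^8*S^8 - 22080*X^10*S^8 + 12160*X^6*S^9 - 81920*X^8*S^9 + 59520*X^10*S^9 + 63168*X^8*S^10 - 54912*X^10*S^10 - 5184*X^12*S^10 - 26880*X^8*S^11 + 23040*X^10*S^11 + 3840*X^12*S^11 + 4480*X^8*S^12 - 3840*X^10*S^12 - 640*X^12*S^12) * heq + (- 208*X - 224*X^3 + 560*X^5 + 6816*X^3*S^2 + 6048*X^4*S*(d⁄dX ℝ S) + 864*X^5*(d⁄dX ℝ S)^2 - 12864*X^5*S^2 - 15552*X^6*S*(d⁄dX ℝ S) - 1728*X^7*(d⁄dX ℝ S)^2 + 4512*X^7*S^2 + 9504*X^8*S*(d⁄dX ℝ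 S) + 864*X^9*(d⁄dX ℝ S)^2 - 4544*X^3*S^3 - 6048*X^4*S^2*(d⁄dX ℝ S) - 1728*X^5*S*(d⁄dX ℝ S)^2 + 8576*X^5*S^3 + 15552*X^6*S^2*(d⁄dX ℝ S) + 3456*X^7*S*(d⁄dX ℝ S)^2 - 3008*X^7*S^3 - 9504*X^8*S^2*(d⁄dX ℝ S) - 1728*X^9*S*(d⁄dX ℝ S)^2 - 1728*X^5*S^4 - 6048*X^6*S^3*(d⁄dX ℝ S) + 7776*X^7*S^2*(d⁄dX ℝ S)^2 + 24192*X^7*S^4 + 43200*X^8*S^3*(d⁄dX ℝ S) - 15552*X^9*S^2*(d⁄dX ℝ S)^2 - 15552*X^9*S^4 - 37152*X^10*S^3*(d⁄dX ℝ S) + 7776*X^11*S^2*(d⁄dX ℝ S)^2 - 576*X^5*S^5 + 8640*X^6*S^4*(d⁄dX ℝ S) - 10368*X^7*S^3*(d⁄dX ℝ S)^2 - 25344*X^7*S^5 - 69120*X^8*S^4*(d⁄dX ℝ S) + 20736*X^9*S^3*(d⁄dX ℝ S)^2 + 16704*X^9*S^5 + 60480*X^10*S^4*(d⁄dX ℝ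 S) - 10368*X^11*S^3*(d⁄dX ℝ S)^2 + 192*X^5*S^6 - 3456*X^6*S^5*(d⁄dX ℝ S) + 5184*X^7*S^4*(d⁄dX ℝ S)^2 - 45984*X^7*S^6 - 68256*X^8*S^5*(d⁄dX ℝ S) - 80352*X^9*S^4*(d⁄dX ℝ S)^2 + 27264*X^9*S^6 + 74304*X^10*S^5*(d⁄dX ℝ S) + 145152*X^11*S^4*(d⁄dX ℝ S)^2 + 7776*X^11*S^6 - 2592*X^12*S^5*(d⁄dX ℝ S) - 69984*X^13*S^4*(d⁄dX ℝ S)^2 + 107136*X^7*S^7 + 227232*X^8*S^6*(d⁄dX ℝ S) + 171072*X^9*S^5*(d⁄dX ℝ S)^2 - 69120*X^9*S^7 - 236736*X^10*S^6*(d⁄dX ℝ S) - 342144*X^11*S^5*(d⁄dX ℝ S)^2 - 10368*X^11*S^7 + 9504*X^12*S^6*(d⁄dX ℝ S) + 171072*X^13*S^5*(d⁄dX ℝ S)^2 - 71136*X^7*S^8 - 172800*X^8*S^7*(d⁄dX ℝ S) - 145152*X^9*S^6*(d⁄dX ℝ S)^2 + 121680*X^9*S^8 + 358560*X^10*S^7*(d⁄dX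 ℝ S) + 406944*X^11*S^6*(d⁄dX ℝ S)^2 - 70272*X^11*S^8 - 271296*X^12*S^7*(d⁄dX ℝ S) - 378432*X^13*S^6*(d⁄dX ℝ S)^2 + 11664*X^13*S^8 + 85536*X^14*S^7*(d⁄dX ℝ S) + 116640*X^15*S^6*(d⁄dX ℝ S)^2 + 15808*X^7*S^9 + 43200*X^8*S^8*(d⁄dX ℝ S) + 41472*X^9*S^7*(d⁄dX ℝ S)^2 - 197248*X^9*S^9 - 578880*X^10*S^8*(d⁄dX ℝ S) - 456192*X^11*S^7*(d⁄dX ℝ S)^2 + 188992*X^11*S^9 + 789696*X^12*S^8*(d⁄dX ℝ S) + 787968*X^13*S^7*(d⁄dX ℝ S)^2 - 31104*X^13*S^9 - 254016*X^14*S^8*(d⁄dX ℝ S) - 373248*X^15*S^7*(d⁄dX ℝ S)^2 + 182304*X^9*S^10 + 587520*X^10*S^9*(d⁄dX ℝ S) + 451008*X^11*S^8*(d⁄dX ℝ S)^2 - 188352*X^11*S^10 - 864000*X^12*S^9*(d⁄dX ℝ S) - 902016*X^13*S^8*(d⁄dX ℝ S)^2 + 33696*X^13*S^10 + 276480*X^14*S^9*(d⁄dX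 ℝ S) + 451008*X^15*S^8*(d⁄dX ℝ S)^2 - 80256*X^9*S^11 - 285120*X^10*S^10*(d⁄dX ℝ S) - 241920*X^11*S^9*(d⁄dX ℝ S)^2 + 83712*X^11*S^11 + 418176*X^12*S^10*(d⁄dX ℝ S) + 483840*X^13*S^9*(d⁄dX ℝ S)^2 - 15744*X^13*S^11 - 133056*X^14*S^10*(d⁄dX ℝ S) - 241920*X^15*S^9*(d⁄dX ℝ S)^2 + 13376*X^9*S^12 + 51840*X^10*S^11*(d⁄dX ℝ S) + 48384*X^11*S^10*(d⁄dX ℝ S)^2 - 13952*X^11*S^12 - 76032*X^12*S^11*(d⁄dX ℝ S) - 96768*X^13*S^10*(d⁄dX ℝ S)^2 + 2624*X^13*S^12 + 24192*X^14*S^11*(d⁄dX ℝ S) + 48384*X^15*S^10*(d⁄dX ℝ S)^2) * hP1 + (144*X^2 - 864*X^4 + 720*X^6 + 864*X^4*S^2 + 2592*X^5*S*(d⁄dX ℝ S) + 5184*X^6*S^2 - 5184*X^7*S*(d⁄dX ℝ S) - 6048*X^8*S^2 + 2592*X^9*S*(d⁄dX ℝ S) - 576*X^4*S^3 - 2592*X^5*S^2*(d⁄dX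 ℝ S) - 3456*X^6*S^3 + 5184*X^7*S^2*(d⁄dX ℝ S) + 4032*X^8*S^3 - 2592*X^9*S^2*(d⁄dX ℝ S) - 15552*X^6*S^4 - 23328*X^7*S^3*(d⁄dX ℝ S) + 46656*X^9*S^3*(d⁄dX ℝ S) + 15552*X^10*S^4 - 23328*X^11*S^3*(d⁄dX ℝ S) + 20736*X^6*S^5 + 38880*X^7*S^4*(d⁄dX ℝ S) - 77760*X^9*S^4*(d⁄dX ℝ S) - 20736*X^10*S^5 + 38880*X^11*S^4*(d⁄dX ℝ S) - 6912*X^6*S^6 - 15552*X^7*S^5*(d⁄dX ℝ S) + 54432*X^8*S^6 + 101088*X^9*S^5*(d⁄dX ℝ S) - 39744*X^10*S^6 - 155520*X^11*S^5*(d⁄dX ℝ S) - 7776*X^12*S^6 + 69984*X^13*S^5*(d⁄dX ℝ S) - 108864*X^8*S^7 - 163296*X^9*S^6*(d⁄dX ℝ S) + 93312*X^10*S^7 + 326592*X^11*S^6*(d⁄dX ℝ S) + 15552*X^12*S^7 - 163296*X^13*S^6*(d⁄dX ℝ S) + 72576*X^8*S^8 + 124416*X^9*S^7*(d⁄dX ℝ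 S) - 120528*X^10*S^8 - 318816*X^11*S^7*(d⁄dX ℝ S) + 59616*X^12*S^8 + 264384*X^13*S^7*(d⁄dX ℝ S) - 11664*X^14*S^8 - 69984*X^15*S^7*(d⁄dX ℝ S) - 16128*X^8*S^9 - 31104*X^9*S^8*(d⁄dX ℝ S) + 169344*X^10*S^9 + 272160*X^11*S^8*(d⁄dX ℝ S) - 184320*X^12*S^9 - 451008*X^13*S^8*(d⁄dX ℝ S) + 31104*X^14*S^9 + 209952*X^15*S^8*(d⁄dX ℝ S) - 155520*X^10*S^10 - 233280*X^11*S^9*(d⁄dX ℝ S) + 186624*X^12*S^10 + 466560*X^13*S^9*(d⁄dX ℝ S) - 31104*X^14*S^10 - 233280*X^15*S^9*(d⁄dX ℝ S) + 69120*X^10*S^11 + 114048*X^11*S^10*(d⁄dX ℝ S) - 82944*X^12*S^11 - 228096*X^13*S^10*(d⁄dX ℝ S) + 13824*X^14*S^11 + 114048*X^15*S^10*(d⁄dX ℝ S) - 11520*X^10*S^12 - 20736*X^11*S^11*(d⁄dX ℝ S) + 13824*X^12*S^12 + 41472*X^13*S^11*(d⁄dX ℝ S) - 2304*X^14*S^12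 - 20736*X^15*S^11*(d⁄dX ℝ S)) * hP2 + (144*X^3 - 288*X^5 + 144*X^7 - 1728*X^5*S^2 + 3456*X^7*S^2 - 1728*X^9*S^2 + 1152*X^5*S^3 - 2304*X^7*S^3 + 1152*X^9*S^3 + 7776*X^7*S^4 - 15552*X^9*S^4 + 7776*X^11*S^4 - 10368*X^7*S^5 + 20736*X^9*S^5 - 10368*X^11*S^5 + 3456*X^7*S^6 - 22464*X^9*S^6 + 34560*X^11*S^6 - 15552*X^13*S^6 + 31104*X^9*S^7 - 62208*X^11*S^7 + 31104*X^13*S^7 - 20736*X^9*S^8 + 53136*X^11*S^8 - 44064*X^13*S^8 + 11664*X^15*S^8 + 4608*X^9*S^9 - 40320*X^11*S^9 + 66816*X^13*S^9 - 31104*X^15*S^9 + 31104*X^11*S^10 - 62208*X^13*S^10 + 31104*X^15*S^10 - 13824*X^11*S^11 + 27648*X^13*S^11 - 13824*X^15*S^11 + 2304*X^11*S^12 - 4608*X^13*S^12 + 2304*X^15*S^12) * hP3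
  have hU : (2 - 6*X^2*S^2 + 4*X^2*S^3) ≠ (0:ℝ⟦X⟧) := by
    intro h
    have hcc := congrArg (constantCoeff) h
    simp only [map_add, map_sub, map_mul, map_pow, map_ofNat, constantCoeff_X, map_zero] at hcc
    norm_num at hcc
  have hL : (C (R := ℝ) 9 * ((d⁄dX ℝ (d⁄dX ℝ (d⁄dX ℝ S))) * X^7) - C (R := ℝ) 18 * ((d⁄dX ℝ (d⁄dX ℝ (d⁄dX ℝ S))) * X^5) + C (R := ℝ) 9 * ((d⁄dX ℝ (d⁄dX ℝ (d⁄dX ℝ S))) * X^3) + C (R := ℝ) 45 * ((d⁄dX ℝ (d⁄dX ℝ S)) * X^6) - C (R := ℝ) 54 * ((d⁄dX ℝ (d⁄dX ℝ S)) * X^4) + C (R := ℝ) 9 * ((d⁄dX ℝ (d⁄dX ℝ S)) * X^2) + C (R := ℝ) 35 * ((d⁄dX ℝ S) * X^5) - C (R := ℝ) 14 * ((d⁄dX ℝ S) * X^3) - C (R := ℝ) 13 * ((d⁄dX ℝ S) * X^1) - C (R := ℝ) 4 * (S * X^2) + C (R := ℝ) 8 * (S * X^0) + C (R := ℝ) 2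 * X^2 - C (R := ℝ) 4 : ℝ⟦X⟧) = 0 := by
    rcases mul_eq_zero.mp hbig with h | h
    · exact absurd (pow_eq_zero_iff (by norm_num : (5:ℕ) ≠ 0) |>.mp h) hU
    · exact h
  intro n
  have hc := congrArg (coeff (n+4)) hL
  simp only [map_add, map_sub, map_zero, coeff_C_mul, coeff_mul_X_pow',
    PowerSeries.coeff_derivative, coeff_C, coeff_X_pow] at hc
  rcases n with _|_|_|m
  · norm_num at hc ⊢; linear_combination hc
  · norm_num at hc ⊢; linear_combination hc
  · norm_num at hc ⊢; linear_combination hc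
  · norm_num at hc ⊢
    push_cast at hc ⊢
    linear_combination hc
end

section
/- The power series s(k) solving k²s⁴ − 2k²s³ + 2s − 1 = 0 with s(0) = 1/2 satisfies the third-order linear differential equation 9k³(k−1)²(k+1)² s'''(k) + 9k²(k−1)(k+1)(5k²−1) s''(k) + k(35k⁴ − 14k² − 13) s'(k) − 4(k² − 2) s(k) = 4 − 2k². -/
open PowerSeries

lemma aux_dOfNat (n : ℕ) [n.AtLeastTwo] : d⁄dX ℝ (no_index (OfNat.ofNat n) : ℝ⟦X⟧) = 0 := by
  rw [← Nat.cast_ofNat]; exact Derivation.map_natCast _ _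

/-- The power series solution of `k²s⁴ − 2k²s³ + 2s − 1 = 0` with `s(0) = 1/2`
satisfies the third order linear ODE
`9k³(k−1)²(k+1)² s''' + 9k²(k−1)(k+1)(5k²−1) s'' + k(35k⁴−14k²−13) s' − 4(k²−2)s = 4 − 2k²`. -/
theorem stmt2 (S : PowerSeries ℝ)
    (h0 : PowerSeries.constantCoeff (R := ℝ) S = 1/2)
    (heq : X^2 * S^4 - 2 * X^2 * S^3 + 2 * S - 1 = 0) :
    9 * X^3 * (X - 1)^2 * (X + 1)^2 * (d⁄dX ℝ (d⁄dX ℝ (d⁄dX ℝ S)))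
      + 9 * X^2 * (X - 1) * (X + 1) * (5 * X^2 - 1) * (d⁄dX ℝ (d⁄dX ℝ S))
      + X * (35 * X^4 - 14 * X^2 - 13) * (d⁄dX ℝ S)
      - 4 * (X^2 - 2) * S
    = 4 - 2 * X^2 := by
  have two0 : d⁄dX ℝ (2:ℝ⟦X⟧) = 0 := by
    rw [show (2:ℝ⟦X⟧) = ((2:ℕ):ℝ⟦X⟧) by norm_num]
    exact Derivation.map_natCast _ 2
  have E1 := congrArg (d⁄dX ℝ) heq
  simp only [map_sub, map_add, map_zero, Derivation.leibniz, Derivation.leibniz_pow,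
    derivative_X, Derivation.map_one_eq_zero, two0, aux_dOfNat, map_neg, neg_zero, smul_eq_mul, nsmul_eq_mul,
    Nat.cast_ofNat, mul_zero, zero_mul, add_zero, zero_add, mul_one, Nat.cast_one] at E1
  have h1 : ((2:ℝ⟦X⟧) + (-6:ℝ⟦X⟧)*X^2*S^2 + (4:ℝ⟦X⟧)*X^2*S^3) * (d⁄dX ℝ S) = (4:ℝ⟦X⟧)*X*S^3 + (-2:ℝ⟦X⟧)*X*S^4 := by
    linear_combination E1
  have E2 := congrArg (d⁄dX ℝ) h1
  simp only [map_sub, map_add, map_zero, Derivation.leibniz, Derivation.leibniz_pow,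
    derivative_X, Derivation.map_one_eq_zero, two0, aux_dOfNat, map_neg, neg_zero, smul_eq_mul, nsmul_eq_mul,
    Nat.cast_ofNat, mul_zero, zero_mul, add_zero, zero_add, mul_one, Nat.cast_one] at E2
  have h2 : ((2:ℝ⟦X⟧) + (-6:ℝ⟦X⟧)*X^2*S^2 + (4:ℝ⟦X⟧)*X^2*S^3)^3 * (d⁄dX ℝ (d⁄dX ℝ S)) = (16:ℝ⟦X⟧)*S^3 + (-8:ℝ⟦X⟧)*S^4 + (96:ℝ⟦X⟧)*X^2*S^5 + (-112:ℝ⟦X⟧)*X^2*S^6 + (32:ℝ⟦X⟧)*X^2*S^7 + (-240:ℝ⟦X⟧)*X^4*S^7 + (408:ℝ⟦X⟧)*X^4*S^8 + (-240:ℝ⟦X⟧)*X^4*S^9 + (48:ℝ⟦X⟧)*X^4*S^10 := by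
    linear_combination ((2:ℝ⟦X⟧) + (-6:ℝ⟦X⟧)*X^2*S^2 + (4:ℝ⟦X⟧)*X^2*S^3)^2 * E2
      + (((2:ℝ⟦X⟧) + (-6:ℝ⟦X⟧)*X^2*S^2 + (4:ℝ⟦X⟧)*X^2*S^3)*((12:ℝ⟦X⟧)*X*S^2 + (-8:ℝ⟦X⟧)*X*S^3) - ((2:ℝ⟦X⟧) + (-6:ℝ⟦X⟧)*X^2*S^2 + (4:ℝ⟦X⟧)*X^2*S^3)*((-12:ℝ⟦X⟧)*X*S^2 + (8:ℝ⟦X⟧)*X*S^3)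
         - ((-12:ℝ⟦X⟧)*X^2*S + (12:ℝ⟦X⟧)*X^2*S^2)*(((2:ℝ⟦X⟧) + (-6:ℝ⟦X⟧)*X^2*S^2 + (4:ℝ⟦X⟧)*X^2*S^3)*(d⁄dX ℝ S) + ((4:ℝ⟦X⟧)*X*S^3 + (-2:ℝ⟦X⟧)*X*S^4))) * h1
  have E3 := congrArg (d⁄dX ℝ) h2
  simp only [map_sub, map_add, map_zero, Derivation.leibniz, Derivation.leibniz_pow,
    derivative_X, Derivation.map_one_eq_zero, two0, aux_dOfNat, map_neg, neg_zero, smul_eq_mul, nsmul_eq_mul,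
    Nat.cast_ofNat, mul_zero, zero_mul, add_zero, zero_add, mul_one, Nat.cast_one] at E3
  have h3 : ((2:ℝ⟦X⟧) + (-6:ℝ⟦X⟧)*X^2*S^2 + (4:ℝ⟦X⟧)*X^2*S^3)^5 * (d⁄dX ℝ (d⁄dX ℝ (d⁄dX ℝ S))) = (2304:ℝ⟦X⟧)*X*S^5 + (-2688:ℝ⟦X⟧)*X*S^6 + (768:ℝ⟦X⟧)*X*S^7 + (-1152:ℝ⟦X⟧)*X^3*S^8 + (960:ℝ⟦X⟧)*X^3*S^9 + (-192:ℝ⟦X⟧)*X^3*S^10 + (-19200:ℝ⟦X⟧)*X^5*S^9 + (46464:ℝ⟦X⟧)*X^5*S^10 + (-42624:ℝ⟦X⟧)*X^5*S^11 + (17472:ℝ⟦X⟧)*X^5*S^12 + (-2688:ℝ⟦X⟧)*X^5*S^13 + (23040:ℝ⟦X⟧)*X^7*S^11 + (-67200:ℝ⟦X⟧)*X^7*S^12 + (80832:ℝ⟦X⟧)*X^7*S^13 + (-49536:ℝ⟦X⟧)*X^7*S^14 + (15360:ℝ⟦X⟧)*X^7*S^15 + (-1920:ℝ⟦X⟧)*X^7*S^16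 := by
    linear_combination ((2:ℝ⟦X⟧) + (-6:ℝ⟦X⟧)*X^2*S^2 + (4:ℝ⟦X⟧)*X^2*S^3)^2 * E3
      + ((-3:ℝ⟦X⟧)*((2:ℝ⟦X⟧) + (-6:ℝ⟦X⟧)*X^2*S^2 + (4:ℝ⟦X⟧)*X^2*S^3)*(((-12:ℝ⟦X⟧)*X*S^2 + (8:ℝ⟦X⟧)*X*S^3) + ((-12:ℝ⟦X⟧)*X^2*S + (12:ℝ⟦X⟧)*X^2*S^2)*(d⁄dX ℝ S))) * h2
      + (((2:ℝ⟦X⟧) + (-6:ℝ⟦X⟧)*X^2*S^2 + (4:ℝ⟦X⟧)*X^2*S^3)*((48:ℝ⟦X⟧)*S^2 + (-32:ℝ⟦X⟧)*S^3 + (480:ℝ⟦X⟧)*X^2*S^4 + (-672:ℝ⟦X⟧)*X^2*S^5 + (224:ℝ⟦X⟧)*X^2*S^6 + (-1680:ℝ⟦X⟧)*X^4*S^6 + (3264:ℝ⟦X⟧)*X^4*S^7 + (-2160:ℝ⟦X⟧)*X^4*S^8 + (480:ℝ⟦X⟧)*X^4*S^9) - (3:ℝ⟦X⟧)*((16:ℝ⟦X⟧)*S^3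 + (-8:ℝ⟦X⟧)*S^4 + (96:ℝ⟦X⟧)*X^2*S^5 + (-112:ℝ⟦X⟧)*X^2*S^6 + (32:ℝ⟦X⟧)*X^2*S^7 + (-240:ℝ⟦X⟧)*X^4*S^7 + (408:ℝ⟦X⟧)*X^4*S^8 + (-240:ℝ⟦X⟧)*X^4*S^9 + (48:ℝ⟦X⟧)*X^4*S^10)*((-12:ℝ⟦X⟧)*X^2*S + (12:ℝ⟦X⟧)*X^2*S^2)) * h1
  have hu : IsUnit ((2:ℝ⟦X⟧) + (-6:ℝ⟦X⟧)*X^2*S^2 + (4:ℝ⟦X⟧)*X^2*S^3 : ℝ⟦X⟧) := by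
    rw [PowerSeries.isUnit_iff_constantCoeff]
    simp [map_add, map_mul, map_pow, constantCoeff_X, map_ofNat]
  apply mul_left_cancel₀ (pow_ne_zero 5 hu.ne_zero)
  linear_combination ((9:ℝ⟦X⟧)*X^3*(X-1)^2*(X+1)^2) * h3
    + ((9:ℝ⟦X⟧)*X^2*(X-1)*(X+1)*(5*X^2-1)) * (((2:ℝ⟦X⟧) + (-6:ℝ⟦X⟧)*X^2*S^2 + (4:ℝ⟦X⟧)*X^2*S^3)^2) * h2
    + (X*((35:ℝ⟦X⟧)*X^4 - 14*X^2 - 13)) * (((2:ℝ⟦X⟧) + (-6:ℝ⟦X⟧)*X^2*S^2 + (4:ℝ⟦X⟧)*X^2*S^3)^4) * h1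
    + ((128:ℝ⟦X⟧) + (-64:ℝ⟦X⟧)*X^2 + (-1920:ℝ⟦X⟧)*X^2*S^2 + (1280:ℝ⟦X⟧)*X^2*S^3 + (960:ℝ⟦X⟧)*X^4*S^2 + (3840:ℝ⟦X⟧)*X^4*S^3 + (18240:ℝ⟦X⟧)*X^4*S^4 + (-28800:ℝ⟦X⟧)*X^4*S^5 + (9600:ℝ⟦X⟧)*X^4*S^6 + (-5120:ℝ⟦X⟧)*X^6*S^3 + (-13440:ℝ⟦X⟧)*X^6*S^4 + (21120:ℝ⟦X⟧)*X^6*S^5 + (-52800:ℝ⟦X⟧)*X^6*S^6 + (84480:ℝ⟦X⟧)*X^6*S^7 + (-54720:ℝ⟦X⟧)*X^6*S^8 + (12160:ℝ⟦X⟧)*X^6*S^9 + (6144:ℝ⟦X⟧)*X^8*S^5 + (32640:ℝ⟦X⟧)*X^8*S^6 + (-76800:ℝ⟦X⟧)*X^8*S^7 + (84480:ℝ⟦X⟧)*X^8*S^8 + (-81920:ℝ⟦X⟧)*X^8*S^9 + (63168:ℝ⟦X⟧)*X^8*S^10 + (-26880:ℝ⟦X⟧)*X^8*S^11 + (4480:ℝ⟦X⟧)*X^8*S^12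 + (-22080:ℝ⟦X⟧)*X^10*S^8 + (59520:ℝ⟦X⟧)*X^10*S^9 + (-54912:ℝ⟦X⟧)*X^10*S^10 + (23040:ℝ⟦X⟧)*X^10*S^11 + (-3840:ℝ⟦X⟧)*X^10*S^12 + (-5184:ℝ⟦X⟧)*X^12*S^10 + (3840:ℝ⟦X⟧)*X^12*S^11 + (-640:ℝ⟦X⟧)*X^12*S^12) * heq
end

section
/- Let φ(x) = x(x+2)³/(2x+1)³. The hypergeometric function ₂F₁(1/2, 5/6; 5/3; ·) satisfies the algebraic transformation ₂F₁(1/2, 5/6; 5/3; φ(x)) = 4(2x+1)^{3/2}/(x+2)² for x in a neighborhood of 0 (as an identity of formal power series in x, or for real x ≥ 0 small). -/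
open scoped Nat

/-- Coefficients of the Gauss hypergeometric series `₂F₁(1/2, 5/6; 5/3; ·)`. -/
noncomputable def hypCoeff (n : ℕ) : ℝ :=
  (ascPochhammer ℝ n).eval (1/2) * (ascPochhammer ℝ n).eval (5/6)
    / ((ascPochhammer ℝ n).eval (5/3) * n !)

/-- The hypergeometric function `₂F₁(1/2, 5/6; 5/3; ·)` as a sum. -/
noncomputable def hypF (z : ℝ) : ℝ := ∑' n : ℕ, hypCoeff n * z ^ n

open FormalMultilinearSeries Filter Topology

noncomputable section

def PhiF (s : ℝ) : ℝ := (s^2-1)*(s^2+3)^3/(16*s^6)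
def GF (s : ℝ) : ℝ := 16*s^3/(s^2+3)^2
def PhiD (s : ℝ) : ℝ := (s^2+3)^2*(s^2-3)^2/(8*s^7)
def a1F (s : ℝ) : ℝ := 128*s^9*(9-s^2)/((s^2+3)^5*(s^2-3)^2)
def a2F (s : ℝ) : ℝ := 3072*s^15*(s^6-21*s^4+87*s^2-243)/((s^2+3)^8*(s^2-3)^5)

def shf (c : ℕ → ℝ) : ℕ → ℝ := fun n => Nat.casesOn n 0 c
@[simp] lemma shf_zero (c : ℕ → ℝ) : shf c 0 = 0 := rfl
@[simp] lemma shf_succ (c : ℕ → ℝ) (n : ℕ) : shf c (n+1) = c n := rfl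

def c1of (c : ℕ → ℝ) : ℕ → ℝ := fun n => ((n:ℝ)+1) * c (n+1)

def dSeq (c : ℕ → ℝ) : ℕ → ℝ := fun n =>
  shf (c1of (c1of c)) n - shf (shf (c1of (c1of c))) n
    + ((5/3) * c1of c n - (7/3) * shf (c1of c) n) - (5/12) * c n

/-! ### elementary power series lemmas -/

lemma hasSum_shf {c : ℕ → ℝ} {z S : ℝ} (h : HasSum (fun n => z ^ n * c n) S) :
    HasSum (fun n => z ^ n * shf c n) (z * S) := by
  have h1 : HasSum (fun n => z ^ (n+1) * shf c (n+1)) (z * S) := by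
    simpa [pow_succ, mul_comm, mul_left_comm, mul_assoc] using h.mul_left z
  have h2 := (hasSum_nat_add_iff (f := fun n => z ^ n * shf c n) 1).mp h1
  simpa using h2

lemma ofScalars_coeff (c : ℕ → ℝ) (n : ℕ) : (ofScalars ℝ c).coeff n = c n := by
  simp [ofScalars, FormalMultilinearSeries.coeff, List.prod_ofFn]

lemma deriv_coeff {f : ℝ → ℝ} {p : FormalMultilinearSeries ℝ ℝ ℝ}
    (h : HasFPowerSeriesAt f p 0) :
    ∃ q : FormalMultilinearSeries ℝ ℝ ℝ, HasFPowerSeriesAt (deriv f) q 0 ∧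
      ∀ n, q.coeff n = ((n : ℝ) + 1) * p.coeff (n+1) := by
  obtain ⟨r, hr⟩ := h
  have hd := hr.fderiv
  set e := ContinuousLinearMap.apply ℝ ℝ (1:ℝ) with he
  have hc := e.comp_hasFPowerSeriesOnBall hd
  have hfun : ⇑e ∘ fderiv ℝ f = deriv f := by
    funext x; simp [he, fderiv_apply_one_eq_deriv]
  rw [hfun] at hc
  refine ⟨_, hc.hasFPowerSeriesAt, fun n => ?_⟩
  show (e.compFormalMultilinearSeries p.derivSeries n) (fun _ => (1:ℝ)) = _
  rw [ContinuousLinearMap.compFormalMultilinearSeries_apply,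
    ContinuousLinearMap.compContinuousMultilinearMap_coe]
  simp only [Function.comp_apply, he, ContinuousLinearMap.apply_apply]
  rw [derivSeries_apply_diag]
  show ((n:ℕ)+1) • p.coeff (n+1) = _
  push_cast [nsmul_eq_mul]
  ring

/-! ### derivative computations -/

lemma sq3 {s : ℝ} : (s^2+3) ≠ 0 := by positivity

lemma hsq {s : ℝ} (n : ℕ) (c : ℝ) : HasStrictDerivAt (fun s : ℝ => (s^2+c)^n)
    (((n:ℝ)*(s^2+c)^(n-1)) * ((2:ℝ)*s^(2-1))) s :=
  (hasStrictDerivAt_pow n (s^2+c)).comp s ((hasStrictDerivAt_pow 2 s).add_const c)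

lemma hsq' {s : ℝ} (n : ℕ) (c : ℝ) : HasStrictDerivAt (fun s : ℝ => (s^2-c)^n)
    (((n:ℝ)*(s^2-c)^(n-1)) * ((2:ℝ)*s^(2-1))) s :=
  (hasStrictDerivAt_pow n (s^2-c)).comp s ((hasStrictDerivAt_pow 2 s).sub_const c)

lemma hasStrictDerivAt_Phi {s : ℝ} (hs : s ≠ 0) : HasStrictDerivAt PhiF (PhiD s) s := by
  have hnum := HasStrictDerivAt.mul ((hasStrictDerivAt_pow 2 s).sub_const 1) (hsq (s := s) 3 3)
  have hden := (hasStrictDerivAt_pow 6 s).const_mul (16:ℝ)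
  have h := hnum.div hden (by simp [pow_ne_zero, hs])
  refine h.congr_deriv ?_
  simp only [PhiD, Pi.mul_apply, Pi.sub_apply]
  field_simp
  ring

lemma hasStrictDerivAt_G {s : ℝ} (hs : s ≠ 0) (hs3 : s^2 - 3 ≠ 0) :
    HasStrictDerivAt GF (a1F s * PhiD s) s := by
  have hnum := (hasStrictDerivAt_pow 3 s).const_mul (16:ℝ)
  have h := hnum.div (hsq (s := s) 2 3) (by positivity)
  refine h.congr_deriv ?_
  simp only [a1F, PhiD]
  field_simp
  ring

lemma hasStrictDerivAt_a1 {s : ℝ} (hs : s ≠ 0) (hs3 : s^2 - 3 ≠ 0) :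
    HasStrictDerivAt a1F (a2F s * PhiD s) s := by
  have hnum := HasStrictDerivAt.mul ((hasStrictDerivAt_pow 9 s).const_mul (128:ℝ))
    ((hasStrictDerivAt_const s (9:ℝ)).sub (hasStrictDerivAt_pow 2 s))
  have hden := HasStrictDerivAt.mul (hsq (s := s) 5 3) (hsq' (s := s) 2 3)
  have h := hnum.div hden (mul_ne_zero (pow_ne_zero _ sq3) (pow_ne_zero _ hs3))
  refine h.congr_deriv ?_
  simp only [a2F, PhiD, Pi.mul_apply, Pi.sub_apply]
  field_simp
  ring

lemma ode_identity {s : ℝ} (hs : s ≠ 0) (hs3 : s^2 - 3 ≠ 0) :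
    PhiF s * a2F s - PhiF s * (PhiF s * a2F s)
      + ((5/3) * a1F s - (7/3) * (PhiF s * a1F s)) - (5/12) * GF s = 0 := by
  simp only [PhiF, GF, a1F, a2F]
  field_simp
  ring

/-! ### recursion lemmas -/

lemma rec_of_d (c : ℕ → ℝ) (hd : ∀ n, dSeq c n = 0) (n : ℕ) :
    ((n:ℝ)+1) * ((n:ℝ)+5/3) * c (n+1) = ((n:ℝ)+1/2) * ((n:ℝ)+5/6) * c n := by
  match n with
  | 0 =>
    have h := hd 0
    simp only [dSeq, c1of, shf_zero, Nat.cast_zero] at h ⊢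
    push_cast at h ⊢
    linarith
  | 1 =>
    have h := hd 1
    simp only [dSeq, c1of, shf_succ, shf_zero, Nat.cast_one] at h ⊢
    push_cast at h ⊢
    linarith
  | (m+2) =>
    have h := hd (m+2)
    simp only [dSeq, c1of, shf_succ] at h ⊢
    push_cast at h ⊢
    nlinarith [h]

lemma hypCoeff_zero : hypCoeff 0 = 1 := by
  simp [hypCoeff]

lemma asc_pos (n : ℕ) : 0 < (ascPochhammer ℝ n).eval (5/3 : ℝ) :=
  ascPochhammer_pos n _ (by norm_num)

lemma hypCoeff_rec (n : ℕ) :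
    ((n:ℝ)+1) * ((n:ℝ)+5/3) * hypCoeff (n+1) = ((n:ℝ)+1/2) * ((n:ℝ)+5/6) * hypCoeff n := by
  have h3 := (asc_pos n).ne'
  have hf : ((n ! : ℝ)) ≠ 0 := by positivity
  simp only [hypCoeff, ascPochhammer_succ_eval, Nat.factorial_succ]
  push_cast
  field_simp
  ring

lemma coeff_unique (c : ℕ → ℝ) (h0 : c 0 = 1)
    (hrec : ∀ n : ℕ, ((n:ℝ)+1) * ((n:ℝ)+5/3) * c (n+1) = ((n:ℝ)+1/2) * ((n:ℝ)+5/6) * c n) :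
    ∀ n, c n = hypCoeff n := by
  intro n
  induction n with
  | zero => rw [h0, hypCoeff_zero]
  | succ m ih =>
    have h1 := hrec m
    have h2 := hypCoeff_rec m
    rw [ih] at h1
    have hne : ((m:ℝ)+1) * ((m:ℝ)+5/3) ≠ 0 := by positivity
    exact mul_left_cancel₀ hne (by linarith [h1.trans h2.symm])

/-! ### analyticity -/

lemma analyticAt_PhiF : AnalyticAt ℝ PhiF 1 := by
  apply AnalyticAt.div
  · exact ((analyticAt_id.pow 2).sub analyticAt_const).mul
      (((analyticAt_id.pow 2).add analyticAt_const).pow 3)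
  · exact analyticAt_const.mul (analyticAt_id.pow 6)
  · norm_num

lemma analyticAt_GF : AnalyticAt ℝ GF 1 := by
  apply AnalyticAt.div
  · exact analyticAt_const.mul (analyticAt_id.pow 3)
  · exact ((analyticAt_id.pow 2).add analyticAt_const).pow 2
  · norm_num

/-! ### main theorem -/

set_option maxHeartbeats 1000000

/-- With `φ(x) = x(x+2)³/(2x+1)³`, for small real `x ≥ 0` one has
`₂F₁(1/2, 5/6; 5/3; φ(x)) = 4(2x+1)^{3/2}/(x+2)²`. -/
theorem stmt3 :
    ∃ ε > (0:ℝ), ∀ x : ℝ, 0 ≤ x → x < ε →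
      hypF (x * (x + 2)^3 / (2*x + 1)^3)
        = 4 * (2*x + 1) ^ ((3:ℝ)/2) / (x + 2)^2 := by
  classical
  have hne8 : (8:ℝ) ≠ 0 := by norm_num
  have hPhiD1 : PhiD 1 = 8 := by norm_num [PhiD]
  have hΦs : HasStrictDerivAt PhiF 8 1 := hPhiD1 ▸ hasStrictDerivAt_Phi one_ne_zero
  set i := ContinuousLinearEquiv.unitsEquivAut ℝ (Units.mk0 (8:ℝ) hne8) with hi
  have hF : HasStrictFDerivAt PhiF ((i : ℝ ≃L[ℝ] ℝ) : ℝ →L[ℝ] ℝ) 1 := hΦs.hasStrictFDerivAt_equiv hne8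
  set f := hF.toOpenPartialHomeomorph PhiF with hfdef
  have hcoe : (f : ℝ → ℝ) = PhiF := hF.toOpenPartialHomeomorph_coe
  have hmem : (1:ℝ) ∈ f.source := hF.mem_toOpenPartialHomeomorph_source
  obtain ⟨p, hp⟩ := analyticAt_PhiF
  have hpf : HasFPowerSeriesAt (↑f) p 1 := by rw [hcoe]; exact hp
  have hΦ1 : PhiF 1 = 0 := by norm_num [PhiF]
  have hf1 : (f : ℝ → ℝ) 1 = 0 := by rw [hcoe, hΦ1]
  -- the linear coefficient of p
  have hpc1 : p.coeff 1 = 8 := by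
    have hd := hp.deriv
    rw [hΦs.hasDerivAt.deriv] at hd
    exact hd.symm
  have hp1 : p 1 = (continuousMultilinearCurryFin1 ℝ ℝ ℝ).symm ↑i := by
    have hext : (continuousMultilinearCurryFin1 ℝ ℝ ℝ) (p 1) = ((i : ℝ ≃L[ℝ] ℝ) : ℝ →L[ℝ] ℝ) := by
      apply ContinuousLinearMap.ext_ring
      have h1 : (Fin.snoc 0 (1:ℝ) : Fin 1 → ℝ) = fun _ => (1:ℝ) := by
        funext j; fin_cases j; simp [Fin.snoc]
      rw [continuousMultilinearCurryFin1_apply, h1]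
      have h2 : (p 1) (fun _ => (1:ℝ)) = p.coeff 1 := rfl
      rw [h2, hpc1]
      simp [hi, ContinuousLinearEquiv.unitsEquivAut]
    rw [← hext, (continuousMultilinearCurryFin1 ℝ ℝ ℝ).symm_apply_apply]
  have hsymm0 := f.hasFPowerSeriesAt_symm hmem hpf hp1
  rw [hf1] at hsymm0
  set ψ : ℝ → ℝ := (f.symm : ℝ → ℝ) with hψdef
  set q := p.leftInv i 1 with hq
  have hψan : AnalyticAt ℝ ψ 0 := ⟨q, hsymm0⟩
  have hψ0 : ψ 0 = 1 := by
    have := f.left_inv hmem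
    rw [hf1] at this
    exact this
  -- the eventual good set
  have hV : ∀ᶠ z in 𝓝 (0:ℝ),
      (PhiF (ψ z) = z ∧ (1/2 < ψ z ∧ ψ z < 3/2) ∧ AnalyticAt ℝ ψ z) := by
    refine Eventually.and ?_ (Eventually.and ?_ ?_)
    · have ht : f.target ∈ 𝓝 (0:ℝ) := by
        have := f.map_source hmem
        rw [hf1] at this
        exact f.open_target.mem_nhds this
      filter_upwards [ht] with z hz
      have := f.right_inv hz
      rw [hcoe] at this
      exact this
    · have hcont : ContinuousAt ψ 0 := hψan.continuousAt
      have hIoo : Set.Ioo (1/2:ℝ) (3/2) ∈ 𝓝 (ψ 0) := by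
        rw [hψ0]; exact isOpen_Ioo.mem_nhds (by norm_num)
      filter_upwards [hcont.preimage_mem_nhds hIoo] with z hz using ⟨hz.1, hz.2⟩
    · exact hψan.eventually_analyticAt
  obtain ⟨V, hVsub, hVopen, hV0⟩ := mem_nhds_iff.mp hV
  -- the composed function A
  set A : ℝ → ℝ := fun z => GF (ψ z) with hA
  -- first derivative on V
  have hA1 : ∀ z ∈ V, HasDerivAt A (a1F (ψ z)) z := by
    intro z hz
    obtain ⟨hinv, ⟨hlo, hhi⟩, han⟩ := hVsub hz
    have hs0 : ψ z ≠ 0 := ne_of_gt (by linarith)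
    have hs3 : (ψ z)^2 - 3 ≠ 0 := by nlinarith
    have hψ' : HasDerivAt ψ (deriv ψ z) z := han.differentiableAt.hasDerivAt
    have hcomp := ((hasStrictDerivAt_Phi hs0).hasDerivAt).comp z hψ'
    have heq : (fun w => PhiF (ψ w)) =ᶠ[𝓝 z] (fun w => w) :=
      eventually_of_mem (hVopen.mem_nhds hz) (fun w hw => (hVsub hw).1)
    have hid : HasDerivAt (fun w : ℝ => w) (PhiD (ψ z) * deriv ψ z) z :=
      heq.hasDerivAt_iff.mp hcomp
    have hone : PhiD (ψ z) * deriv ψ z = 1 := hid.unique (hasDerivAt_id z)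
    have hG := ((hasStrictDerivAt_G hs0 hs3).hasDerivAt).comp z hψ'
    have hval : a1F (ψ z) * PhiD (ψ z) * deriv ψ z = a1F (ψ z) := by
      rw [mul_assoc, hone, mul_one]
    rw [hval] at hG
    exact hG
  -- second derivative on V
  have hA2 : ∀ z ∈ V, HasDerivAt (deriv A) (a2F (ψ z)) z := by
    intro z hz
    obtain ⟨hinv, ⟨hlo, hhi⟩, han⟩ := hVsub hz
    have hs0 : ψ z ≠ 0 := ne_of_gt (by linarith)
    have hs3 : (ψ z)^2 - 3 ≠ 0 := by nlinarith
    have hψ' : HasDerivAt ψ (deriv ψ z) z := han.differentiableAt.hasDerivAt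
    have hcomp := ((hasStrictDerivAt_Phi hs0).hasDerivAt).comp z hψ'
    have heq : (fun w => PhiF (ψ w)) =ᶠ[𝓝 z] (fun w => w) :=
      eventually_of_mem (hVopen.mem_nhds hz) (fun w hw => (hVsub hw).1)
    have hid : HasDerivAt (fun w : ℝ => w) (PhiD (ψ z) * deriv ψ z) z :=
      heq.hasDerivAt_iff.mp hcomp
    have hone : PhiD (ψ z) * deriv ψ z = 1 := hid.unique (hasDerivAt_id z)
    have ha1 := ((hasStrictDerivAt_a1 hs0 hs3).hasDerivAt).comp z hψ'
    have hval : a2F (ψ z) * PhiD (ψ z) * deriv ψ z = a2F (ψ z) := by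
      rw [mul_assoc, hone, mul_one]
    rw [hval] at ha1
    have heq2 : deriv A =ᶠ[𝓝 z] (fun w => a1F (ψ w)) :=
      eventually_of_mem (hVopen.mem_nhds hz) (fun w hw => (hA1 w hw).deriv)
    exact heq2.hasDerivAt_iff.mpr ha1
  -- the power series of A
  have hGan : AnalyticAt ℝ GF (ψ 0) := by rw [hψ0]; exact analyticAt_GF
  have hAan : AnalyticAt ℝ A 0 := hGan.comp hψan
  obtain ⟨P, hP⟩ := hAan
  obtain ⟨Q1, hQ1, hQ1c⟩ := deriv_coeff hP
  obtain ⟨Q2, hQ2, hQ2c⟩ := deriv_coeff hQ1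
  set c : ℕ → ℝ := fun n => P.coeff n with hc
  have hS0 := hasFPowerSeriesAt_iff.mp hP
  have hS1 := hasFPowerSeriesAt_iff.mp hQ1
  have hS2 := hasFPowerSeriesAt_iff.mp hQ2
  -- the ODE implies the vanishing of dSeq c
  have hDzero : ∀ n, dSeq c n = 0 := by
    have hzero : HasFPowerSeriesAt (fun _ => (0:ℝ)) (ofScalars ℝ (dSeq c)) 0 := by
      rw [hasFPowerSeriesAt_iff]
      filter_upwards [hS0, hS1, hS2, hVopen.mem_nhds hV0] with z h0 h1 h2 hzV
      simp only [smul_eq_mul, zero_add] at h0 h1 h2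
      obtain ⟨hinv, ⟨hlo, hhi⟩, han⟩ := hVsub hzV
      have hs0 : ψ z ≠ 0 := ne_of_gt (by linarith)
      have hs3 : (ψ z)^2 - 3 ≠ 0 := by nlinarith
      -- rewrite coefficients
      have h1' : HasSum (fun n => z ^ n * c1of c n) (deriv A z) := by
        have : (fun n => z ^ n * c1of c n) = (fun n => z ^ n * Q1.coeff n) := by
          funext n; rw [hQ1c]; try rfl
        rw [this]; exact h1
      have h2' : HasSum (fun n => z ^ n * c1of (c1of c) n) (deriv (deriv A) z) := by
        have : (fun n => z ^ n * c1of (c1of c) n) = (fun n => z ^ n * Q2.coeff n) := by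
          funext n
          rw [hQ2c, hQ1c]
          simp only [c1of]
          try push_cast
          try ring
        rw [this]; exact h2
      have h0' : HasSum (fun n => z ^ n * c n) (A z) := h0
      have HS := (((hasSum_shf h2').sub (hasSum_shf (hasSum_shf h2'))).add
        ((h1'.mul_left (5/3)).sub ((hasSum_shf h1').mul_left (7/3)))).sub
        (h0'.mul_left (5/12))
      have hgoalf : (fun n => z ^ n • (ofScalars ℝ (dSeq c)).coeff n)
          = (fun n => (z ^ n * shf (c1of (c1of c)) n - z ^ n * shf (shf (c1of (c1of c))) n
              + ((5/3) * (z ^ n * c1of c n) - (7/3) * (z ^ n * shf (c1of c) n)))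
              - (5/12) * (z ^ n * c n)) := by
        funext n
        rw [smul_eq_mul, ofScalars_coeff]
        simp only [dSeq]
        ring
      rw [hgoalf]
      convert HS using 1
      have hS1v : deriv A z = a1F (ψ z) := (hA1 z hzV).deriv
      have hS2v : deriv (deriv A) z = a2F (ψ z) := (hA2 z hzV).deriv
      have hAz : A z = GF (ψ z) := rfl
      have hode := ode_identity hs0 hs3
      rw [hinv] at hode
      rw [hS2v, hS1v, hAz]
      show (0:ℝ) = _
      linear_combination -hode
    have hzeq : ofScalars ℝ (dSeq c) = 0 := hzero.eq_zero
    intro n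
    have hzn : ofScalars ℝ (dSeq c) n = 0 := by rw [hzeq]; rfl
    rwa [ofScalars_eq_zero] at hzn
  -- identify the coefficients
  have hc0 : c 0 = 1 := by
    have h00 : P.coeff 0 = A 0 := hP.coeff_zero 1
    rw [hc]
    simp only [h00, hA, hψ0]
    norm_num [GF]
  have hcoeff : ∀ n, c n = hypCoeff n := coeff_unique c hc0 (rec_of_d c hDzero)
  -- hypF equals A near 0
  have hFinal : ∀ᶠ z in 𝓝 (0:ℝ), hypF z = A z := by
    filter_upwards [hS0] with z h0
    have hsum : HasSum (fun n => hypCoeff n * z ^ n) (A z) := by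
      have hfun2 : (fun n => hypCoeff n * z ^ n) = (fun n => z ^ n • P.coeff n) := by
        funext n; rw [smul_eq_mul, ← hcoeff n, mul_comm]; try rfl
      rw [hfun2]
      simpa using h0
    rw [hypF]
    exact hsum.tsum_eq
  -- transfer to the x variable
  have hφcont : ContinuousAt (fun x : ℝ => x * (x + 2)^3 / (2*x + 1)^3) 0 := by
    apply ContinuousAt.div
    · fun_prop
    · fun_prop
    · norm_num
  have hφ0 : (fun x : ℝ => x * (x + 2)^3 / (2*x + 1)^3) 0 = 0 := by norm_num
  have hsqcont : ContinuousAt (fun x : ℝ => Real.sqrt (2*x+1)) 0 := by fun_prop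
  have hsq1 : Real.sqrt (2*0+1) = 1 := by norm_num
  have hX : ∀ᶠ x in 𝓝 (0:ℝ),
      hypF (x * (x + 2)^3 / (2*x + 1)^3) = 4 * (2*x + 1) ^ ((3:ℝ)/2) / (x + 2)^2 := by
    have E1 : ∀ᶠ x in 𝓝 (0:ℝ), Real.sqrt (2*x+1) ∈ f.source := by
      apply hsqcont.preimage_mem_nhds
      rw [hsq1]
      exact f.open_source.mem_nhds hmem
    have E2 : ∀ᶠ x in 𝓝 (0:ℝ), 0 < 2*x+1 := by
      have : ContinuousAt (fun x : ℝ => 2*x+1) 0 := by fun_prop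
      have h01 : Set.Ioi (0:ℝ) ∈ 𝓝 ((fun x : ℝ => 2*x+1) 0) := by
        norm_num
        exact isOpen_Ioi.mem_nhds (by norm_num)
      filter_upwards [this.preimage_mem_nhds h01] with x hx using hx
    have E3 : ∀ᶠ x in 𝓝 (0:ℝ),
        hypF ((fun x : ℝ => x * (x + 2)^3 / (2*x + 1)^3) x)
          = A ((fun x : ℝ => x * (x + 2)^3 / (2*x + 1)^3) x) := by
      have := hFinal
      rw [← hφ0] at this
      exact hφcont.eventually this
    filter_upwards [E1, E2, E3] with x h1 h2 h3
    set s := Real.sqrt (2*x+1) with hsdef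
    have hs2 : s^2 = 2*x+1 := Real.sq_sqrt (by linarith)
    have hspos : 0 < s := Real.sqrt_pos.mpr h2
    have h2x : (2*x+1) ≠ 0 := by linarith
    have hx2 : (x+2) ≠ 0 := by intro hc0'; linarith
    have hkey : PhiF s = x*(x+2)^3/(2*x+1)^3 := by
      simp only [PhiF]
      rw [show s^6 = (s^2)^3 by ring, hs2]
      field_simp
      ring
    have hψφ : ψ (x*(x+2)^3/(2*x+1)^3) = s := by
      rw [← hkey]
      have := f.left_inv h1
      rw [hcoe] at this
      exact this
    rw [h3]
    show GF (ψ (x * (x + 2)^3 / (2*x + 1)^3)) = _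
    rw [hψφ]
    have hrpow : (2*x+1) ^ ((3:ℝ)/2) = s^3 := by
      rw [hsdef, Real.sqrt_eq_rpow, ← Real.rpow_natCast ((2*x+1) ^ ((1:ℝ)/2)) 3,
        ← Real.rpow_mul (by linarith)]
      norm_num
    simp only [GF]
    rw [hrpow, hs2]
    field_simp
    ring
  rw [Metric.eventually_nhds_iff] at hX
  obtain ⟨ε, hε, hball⟩ := hX
  refine ⟨ε, hε, fun x hx0 hxε => ?_⟩
  exact hball (by rw [Real.dist_eq, sub_zero, abs_of_nonneg hx0]; exact hxε)

end
end

section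
/- Substituting t = (x²+x+1)/(1+x−2x²) and k² = φ(x) with φ(x) = x(x+2)³/(2x+1)³ into the quartic −27(1−k²)t⁴ + 18(1−k²)t² + 2(2−k²)²t + 1 − k² + k⁴ yields identically zero as a rational function of x. -/
/-- Substituting `t = (x²+x+1)/(1+x−2x²)` and `k² = φ(x)` with
`φ(x) = x(x+2)³/(2x+1)³` into the quartic
`−27(1−k²)t⁴ + 18(1−k²)t² + 2(2−k²)²t + 1 − k² + k⁴` yields identically zero,
as an identity of rational functions of `x`. -/
theorem stmt5 :
    ∀ x : ℝ, 2*x + 1 ≠ 0 → 1 + x - 2*x^2 ≠ 0 →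
      -27 * (1 - x * (x + 2)^3 / (2*x + 1)^3)
          * ((x^2 + x + 1)/(1 + x - 2*x^2))^4
        + 18 * (1 - x * (x + 2)^3 / (2*x + 1)^3)
          * ((x^2 + x + 1)/(1 + x - 2*x^2))^2
        + 2 * (2 - x * (x + 2)^3 / (2*x + 1)^3)^2
          * ((x^2 + x + 1)/(1 + x - 2*x^2))
        + 1 - x * (x + 2)^3 / (2*x + 1)^3
        + (x * (x + 2)^3 / (2*x + 1)^3)^2 = 0 := by
  intro x h1 h2
  have h3 : x * 2 + 1 ≠ 0 := by rwa [mul_comm]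
  have h4 : 1 + x - x ^ 2 * 2 ≠ 0 := by rwa [mul_comm]
  field_simp
  ring
end

section
/- If s ≠ 0, s ≠ 1 and s satisfies k²s⁴ − 2k²s³ + 2s − 1 = 0, then t = (s² − s + 1)/(3s(1−s)) satisfies −27(1−k²)t⁴ + 18(1−k²)t² + 2(2−k²)²t + 1 − k² + k⁴ = 0. -/
/-- If `s ∉ {0,1}` satisfies `k²s⁴ − 2k²s³ + 2s − 1 = 0`, then
`t = (s² − s + 1)/(3s(1−s))` satisfies
`−27(1−k²)t⁴ + 18(1−k²)t² + 2(2−k²)²t + 1 − k² + k⁴ = 0`. -/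
theorem stmt6 (k s : ℝ) (hs0 : s ≠ 0) (hs1 : s ≠ 1)
    (h : k^2 * s^4 - 2 * k^2 * s^3 + 2 * s - 1 = 0) :
    -27 * (1 - k^2) * ((s^2 - s + 1)/(3 * s * (1 - s)))^4
      + 18 * (1 - k^2) * ((s^2 - s + 1)/(3 * s * (1 - s)))^2
      + 2 * (2 - k^2)^2 * ((s^2 - s + 1)/(3 * s * (1 - s)))
      + 1 - k^2 + k^4 = 0 := by
  have hs1' : 1 - s ≠ 0 := sub_ne_zero.mpr (Ne.symm hs1)
  have hden : 3 * s * (1 - s) ≠ 0 := by positivity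
  field_simp
  linear_combination (27 - 27*k^2 - 54*s + 54*k^2*s - 54*k^2*s^3 + 27*k^2*s^4) * h
end

section
/- For every k ∈ (0,1), the quartic polynomial q(t) = −27(1−k²)t⁴ + 18(1−k²)t² + 2(2−k²)²t + 1 − k² + k⁴ has exactly two real roots (counted without multiplicity the real root set has cardinality 2) and two non-real complex conjugate roots, and none of its roots is zero. -/
open Complex

noncomputable def frP (k t : ℝ) : ℝ :=
  -27*(1-k^2)*t^4 + 18*(1-k^2)*t^2 + 2*(2-k^2)^2*t + 1 - k^2 + k^4

noncomputable def frP' (k t : ℝ) : ℝ :=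
  -108*(1-k^2)*t^3 + 36*(1-k^2)*t + 2*(2-k^2)^2

lemma frP_cont (k : ℝ) : Continuous (frP k) := by
  unfold frP; fun_prop

lemma frP_hasDeriv (k t : ℝ) : HasDerivAt (frP k) (frP' k t) t := by
  have h4 : HasDerivAt (fun t:ℝ => t^4) (4*t^3) t := by simpa using hasDerivAt_pow 4 t
  have h2 : HasDerivAt (fun t:ℝ => t^2) (2*t) t := by simpa using hasDerivAt_pow 2 t
  have h1 : HasDerivAt (fun t:ℝ => t) 1 t := hasDerivAt_id t
  have H := ((((h4.const_mul (-27*(1-k^2))).add (h2.const_mul (18*(1-k^2)))).add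
      (h1.const_mul (2*(2-k^2)^2))).add_const 1).sub_const (k^2) |>.add_const (k^4)
  refine (H.congr_deriv (by unfold frP'; ring)).congr_of_eventuallyEq (Filter.Eventually.of_forall fun x => ?_)
  simp only [frP, Pi.add_apply]

lemma crit_gt {k u : ℝ} (hk0 : 0 < k) (hk1 : k < 1) (hu : frP' k u = 0) : 2/3 < u := by
  unfold frP' at hu
  have ha : (0:ℝ) < 1 - k^2 := by nlinarith
  have h54 : 54*(1-k^2)*((u+1/3)^2*(u-2/3)) = k^4 := by linear_combination (-1/2 : ℝ) * hu
  by_contra h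
  push_neg at h
  have h2 : (u+1/3)^2*(u-2/3) ≤ 0 :=
    mul_nonpos_of_nonneg_of_nonpos (sq_nonneg _) (by linarith)
  have h3 : 54*(1-k^2)*((u+1/3)^2*(u-2/3)) ≤ 0 :=
    mul_nonpos_of_nonneg_of_nonpos (by positivity) h2
  rw [h54] at h3
  nlinarith [pow_pos hk0 4]

lemma crit_unique {k u v : ℝ} (hk0 : 0 < k) (hk1 : k < 1)
    (hu : frP' k u = 0) (hv : frP' k v = 0) : u = v := by
  have hug := crit_gt hk0 hk1 hu
  have hvg := crit_gt hk0 hk1 hv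
  have ha : (0:ℝ) < 1 - k^2 := by nlinarith
  unfold frP' at hu hv
  have key : (u - v) * (108*(1-k^2)*(u^2+u*v+v^2) - 36*(1-k^2)) = 0 := by
    linear_combination hv - hu
  have huv : u^2+u*v+v^2 > 4/3 := by nlinarith
  have hpos : 108*(1-k^2)*(u^2+u*v+v^2) - 36*(1-k^2) > 0 := by
    nlinarith [mul_pos ha (by linarith : (0:ℝ) < u^2+u*v+v^2 - 1/3)]
  have := mul_eq_zero.mp key
  rcases this with h | h
  · linarith
  · linarith

lemma no_common {k r : ℝ} (hk0 : 0 < k) (hk1 : k < 1)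
    (hr : frP k r = 0) (hr' : frP' k r = 0) : False := by
  have hg := crit_gt hk0 hk1 hr'
  have ha : (0:ℝ) < 1 - k^2 := by nlinarith
  unfold frP at hr
  unfold frP' at hr'
  have key : 9*(1-k^2)*r^2 + (3/2)*(2-k^2)^2*r + (1-k^2+k^4) = 0 := by
    linear_combination hr - (r/4)*hr'
  have hr0 : (0:ℝ) < r := by linarith
  nlinarith [sq_nonneg (k^2 - 1/2), mul_pos ha (mul_pos hr0 hr0), mul_pos (mul_pos hr0 hr0) hr0]

lemma atMostTwo {k x y z : ℝ} (hk0 : 0 < k) (hk1 : k < 1)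
    (hxy : x < y) (hyz : y < z)
    (h1 : frP k x = 0) (h2 : frP k y = 0) (h3 : frP k z = 0) : False := by
  obtain ⟨u, hu, hu'⟩ := exists_hasDerivAt_eq_zero hxy
    ((frP_cont k).continuousOn) (by rw [h1, h2]) (fun t _ => frP_hasDeriv k t)
  obtain ⟨v, hv, hv'⟩ := exists_hasDerivAt_eq_zero hyz
    ((frP_cont k).continuousOn) (by rw [h2, h3]) (fun t _ => frP_hasDeriv k t)
  have := crit_unique hk0 hk1 hu' hv'
  rw [Set.mem_Ioo] at hu hv
  linarith [hu.2, hv.1, this]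

lemma posC {k : ℝ} (hk0 : 0 < k) (hk1 : k < 1) : 0 < 1 - k^2 + k^4 := by
  nlinarith [sq_nonneg (k^2 - 1/2)]

lemma exists_roots {k : ℝ} (hk0 : 0 < k) (hk1 : k < 1) :
    ∃ r1 r2 : ℝ, r1 < 0 ∧ 0 < r2 ∧ frP k r1 = 0 ∧ frP k r2 = 0 := by
  have ha : (0:ℝ) < 1 - k^2 := by nlinarith
  have hf0 : 0 < frP k 0 := by unfold frP; simpa using posC hk0 hk1
  have hfm1 : frP k (-1) < 0 := by unfold frP; nlinarith
  -- negative root in (-1, 0)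
  have h1 : (0:ℝ) ∈ Set.Ioo (frP k (-1)) (frP k 0) := ⟨hfm1, hf0⟩
  have := intermediate_value_Ioo (by norm_num : (-1:ℝ) ≤ 0) ((frP_cont k).continuousOn) h1
  obtain ⟨r1, hr1m, hr1⟩ := this
  -- positive root
  set T : ℝ := 1 + 1/(1-k^2) with hT
  have hTa : (1-k^2)*T = 2-k^2 := by
    rw [hT, mul_add, mul_one, mul_one_div_cancel ha.ne']
    ring
  have hT2 : 2 < T := by
    have : 1 < 1/(1-k^2) := by
      rw [lt_div_iff₀ ha]; nlinarith
    rw [hT]; linarith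
  have hfT : frP k T < 0 := by
    have hrw : frP k T = -27*(2-k^2)*T^3 + 18*(2-k^2)*T + 2*(2-k^2)^2*T + 1-k^2+k^4 := by
      unfold frP; linear_combination (-27*T^3 + 18*T) * hTa
    rw [hrw]
    have hb1 : (1:ℝ) < 2-k^2 := by nlinarith
    have hb2 : (2-k^2:ℝ) < 2 := by nlinarith
    nlinarith [mul_pos (by linarith : (0:ℝ) < 2-k^2) (by linarith : (0:ℝ) < T),
      mul_pos (mul_pos (by linarith : (0:ℝ) < 2-k^2) (by linarith : (0:ℝ) < T)) (by nlinarith : (0:ℝ) < T^2 - 4)]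
  have h2 : (0:ℝ) ∈ Set.Ioo (frP k T) (frP k 0) := ⟨hfT, hf0⟩
  have := intermediate_value_Ioo' (by linarith : (0:ℝ) ≤ T) ((frP_cont k).continuousOn) h2
  obtain ⟨r2, hr2m, hr2⟩ := this
  exact ⟨r1, r2, hr1m.2, hr2m.1, hr1, hr2⟩

lemma fact_gen {F : Type*} [Field F] (k r1 r2 t : F) (hne : r1 ≠ r2)
    (h1 : -27*(1-k^2)*r1^4 + 18*(1-k^2)*r1^2 + 2*(2-k^2)^2*r1 + 1 - k^2 + k^4 = 0)
    (h2 : -27*(1-k^2)*r2^4 + 18*(1-k^2)*r2^2 + 2*(2-k^2)^2*r2 + 1 - k^2 + k^4 = 0) :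
    -27*(1-k^2)*t^4 + 18*(1-k^2)*t^2 + 2*(2-k^2)^2*t + 1 - k^2 + k^4
      = -(1-k^2)*(t-r1)*(t-r2)*(27*t^2+27*(r1+r2)*t+(27*(r1+r2)^2 - 27*r1*r2 - 18)) := by
  have key : (r1-r2) * ((-27*(1-k^2)*t^4 + 18*(1-k^2)*t^2 + 2*(2-k^2)^2*t + 1 - k^2 + k^4)
      - (-(1-k^2)*(t-r1)*(t-r2)*(27*t^2+27*(r1+r2)*t+(27*(r1+r2)^2 - 27*r1*r2 - 18)))) = 0 := by
    linear_combination (t - r2) * h1 - (t - r1) * h2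
  rcases mul_eq_zero.mp key with h | h
  · exact absurd (sub_eq_zero.mp h) hne
  · exact sub_eq_zero.mp h

lemma frP_eq (k t : ℝ) : frP k t = -27*(1-k^2)*t^4 + 18*(1-k^2)*t^2 + 2*(2-k^2)^2*t + 1 - k^2 + k^4 := rfl

lemma disc_neg {k r1 r2 : ℝ} (hk0 : 0 < k) (hk1 : k < 1) (h12 : r1 < r2)
    (hr1 : frP k r1 = 0) (hr2 : frP k r2 = 0) :
    (r1+r2)^2 - 4*((r1+r2)^2 - r1*r2 - 2/3) < 0 := by
  by_contra hD'
  push_neg at hD'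
  set s : ℝ := r1 + r2 with hs
  set γ : ℝ := (r1+r2)^2 - r1*r2 - 2/3 with hγ
  have hne : r1 ≠ r2 := ne_of_lt h12
  have hfact : ∀ t : ℝ, frP k t
      = -(1-k^2)*(t-r1)*(t-r2)*(27*t^2+27*(r1+r2)*t+(27*(r1+r2)^2 - 27*r1*r2 - 18)) := by
    intro t
    rw [frP_eq]
    exact fact_gen k r1 r2 t hne (by rw [← frP_eq]; exact hr1) (by rw [← frP_eq]; exact hr2)
  have hsq := Real.sq_sqrt hD'
  set x : ℝ := (-s + Real.sqrt (s^2 - 4*γ))/2 with hx'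
  have hx : x^2 + s*x + γ = 0 := by
    rw [hx']
    linear_combination (1/4 : ℝ) * hsq
  have hfx : frP k x = 0 := by
    rw [hfact x]
    linear_combination (-(1-k^2)*(x-r1)*(x-r2)*27) * hx
  have hor : x = r1 ∨ x = r2 := by
    by_contra h
    push_neg at h
    rcases lt_trichotomy x r1 with h' | h' | h'
    · exact atMostTwo hk0 hk1 h' h12 hfx hr1 hr2
    · exact h.1 h'
    · rcases lt_trichotomy x r2 with h'' | h'' | h''
      · exact atMostTwo hk0 hk1 h' h'' hr1 hfx hr2
      · exact h.2 h''
      · exact atMostTwo hk0 hk1 h12 h'' hr1 hr2 hfx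
  have Hz : (x - r1) * (x - r2) = 0 := by
    rcases hor with h | h <;> rw [h] <;> ring
  -- derivative of the factored form at x
  have d1 : HasDerivAt (fun t : ℝ => -(1-k^2)*(t-r1)) (-(1-k^2)*1) x :=
    ((hasDerivAt_id x).sub_const r1).const_mul (-(1-k^2))
  have d2 : HasDerivAt (fun t : ℝ => t - r2) 1 x := (hasDerivAt_id x).sub_const r2
  have q2 : HasDerivAt (fun t : ℝ => t^2) (2*x) x := by simpa using hasDerivAt_pow 2 x
  have d3 : HasDerivAt (fun t : ℝ => 27*t^2+27*(r1+r2)*t+(27*(r1+r2)^2 - 27*r1*r2 - 18))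
      (27*(2*x) + 27*(r1+r2)*1) x :=
    ((q2.const_mul 27).add ((hasDerivAt_id x).const_mul (27*(r1+r2)))).add_const _
  have D := (d1.fun_mul d2).fun_mul d3
  have hF : frP k = fun t : ℝ =>
      -(1-k^2)*(t-r1)*(t-r2)*(27*t^2+27*(r1+r2)*t+(27*(r1+r2)^2 - 27*r1*r2 - 18)) :=
    funext hfact
  rw [← hF] at D
  have hval := (frP_hasDeriv k x).unique D
  have hfx' : frP' k x = 0 := by
    rw [hval]
    linear_combination (27*(-(1-k^2))*((x-r2)+(x-r1))) * hx
      + (-(1-k^2)*(54*x+27*(r1+r2))) * Hz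
  exact no_common hk0 hk1 hfx hfx'


/-- For every `k ∈ (0,1)`, the quartic
`q(t) = −27(1−k²)t⁴ + 18(1−k²)t² + 2(2−k²)²t + 1 − k² + k⁴` has exactly two
real roots, its non-real roots form a conjugate pair `{z, z̄}` with `z` non-real,
and no root is zero. -/
theorem stmt14 (k : ℝ) (hk : k ∈ Set.Ioo (0:ℝ) 1)
    (q : ℂ → ℂ)
    (hq : ∀ t : ℂ, q t = -27*(1 - (k:ℂ)^2)*t^4 + 18*(1 - (k:ℂ)^2)*t^2
      + 2*(2 - (k:ℂ)^2)^2*t + 1 - (k:ℂ)^2 + (k:ℂ)^4) :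
    ({t : ℝ | q (t : ℂ) = 0}).ncard = 2 ∧
    (∃ z : ℂ, z.im ≠ 0 ∧
      {w : ℂ | q w = 0 ∧ w.im ≠ 0} = {z, starRingEnd ℂ z}) ∧
    (∀ w : ℂ, q w = 0 → w ≠ 0) := by
  obtain ⟨hk0, hk1⟩ := hk
  obtain ⟨r1, r2, hr1n, hr2p, hr1, hr2⟩ := exists_roots hk0 hk1
  have h12 : r1 < r2 := lt_trans hr1n hr2p
  have hne : r1 ≠ r2 := ne_of_lt h12
  have hdisc := disc_neg hk0 hk1 h12 hr1 hr2
  have ha : (0:ℝ) < 1 - k^2 := by nlinarith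
  have he : (0:ℝ) < 4*((r1+r2)^2 - r1*r2 - 2/3) - (r1+r2)^2 := by linarith
  set b0 : ℝ := Real.sqrt (4*((r1+r2)^2 - r1*r2 - 2/3) - (r1+r2)^2) with hb0def
  have hb0 : 0 < b0 := Real.sqrt_pos.mpr he
  have hsqR : b0^2 = 4*((r1+r2)^2 - r1*r2 - 2/3) - (r1+r2)^2 := Real.sq_sqrt he.le
  have hsqC : ((b0:ℂ))^2 = 4*(((r1:ℂ)+r2)^2 - (r1:ℂ)*r2 - 2/3) - ((r1:ℂ)+r2)^2 := by
    have h := congrArg (fun x : ℝ => (x:ℂ)) hsqR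
    push_cast at h
    exact_mod_cast h
  set z : ℂ := (↑(-((r1+r2)/2)) : ℂ) + ↑(b0/2) * Complex.I with hzdef
  have hzim : z.im = b0/2 := by simp [hzdef]
  have hzconj : starRingEnd ℂ z = (↑(-((r1+r2)/2)) : ℂ) - ↑(b0/2) * Complex.I := by
    rw [hzdef, map_add, map_mul, Complex.conj_ofReal, Complex.conj_ofReal, Complex.conj_I]
    ring
  have hzconjim : (starRingEnd ℂ z).im = -(b0/2) := by rw [hzconj]; simp
  have hzimne : z.im ≠ 0 := by rw [hzim]; positivity
  have hzconjimne : (starRingEnd ℂ z).im ≠ 0 := by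
    rw [hzconjim]; simp; positivity
  -- complex factorization
  have hneC : (r1:ℂ) ≠ (r2:ℂ) := by exact_mod_cast hne
  have hr1' : -27*(1-k^2)*r1^4 + 18*(1-k^2)*r1^2 + 2*(2-k^2)^2*r1 + 1 - k^2 + k^4 = 0 := by
    rw [← frP_eq]; exact hr1
  have hr2' : -27*(1-k^2)*r2^4 + 18*(1-k^2)*r2^2 + 2*(2-k^2)^2*r2 + 1 - k^2 + k^4 = 0 := by
    rw [← frP_eq]; exact hr2
  have h1C : -27*(1-(k:ℂ)^2)*(r1:ℂ)^4 + 18*(1-(k:ℂ)^2)*(r1:ℂ)^2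
      + 2*(2-(k:ℂ)^2)^2*(r1:ℂ) + 1 - (k:ℂ)^2 + (k:ℂ)^4 = 0 := by exact_mod_cast hr1'
  have h2C : -27*(1-(k:ℂ)^2)*(r2:ℂ)^4 + 18*(1-(k:ℂ)^2)*(r2:ℂ)^2
      + 2*(2-(k:ℂ)^2)^2*(r2:ℂ) + 1 - (k:ℂ)^2 + (k:ℂ)^4 = 0 := by exact_mod_cast hr2'
  have hfC : ∀ w : ℂ, q w
      = -27*(1-(k:ℂ)^2)*(w - r1)*(w - r2)*((w - z)*(w - starRingEnd ℂ z)) := by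
    intro w
    rw [hq w, fact_gen (k:ℂ) (r1:ℂ) (r2:ℂ) w hneC h1C h2C, hzconj, hzdef]
    push_cast
    linear_combination ((27:ℂ)/4*(-(1-(k:ℂ)^2)*(w-(r1:ℂ))*(w-(r2:ℂ)))*((b0:ℂ))^2) * Complex.I_sq
      + (-(27:ℂ)/4*(-(1-(k:ℂ)^2)*(w-(r1:ℂ))*(w-(r2:ℂ)))) * hsqC
  have hlead : (1:ℂ) - (k:ℂ)^2 ≠ 0 := by
    intro h
    have : (1:ℝ) - k^2 = 0 := by exact_mod_cast h
    linarith
  have hroots : ∀ w : ℂ, q w = 0 ↔ (w = ↑r1 ∨ w = ↑r2 ∨ w = z ∨ w = starRingEnd ℂ z) := by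
    intro w
    rw [hfC w]
    simp only [mul_eq_zero, sub_eq_zero, hlead]
    norm_num
    tauto
  refine ⟨?_, ⟨z, hzimne, ?_⟩, ?_⟩
  · have hset : {t : ℝ | q (t:ℂ) = 0} = {r1, r2} := by
      ext t
      simp only [Set.mem_setOf_eq, Set.mem_insert_iff, Set.mem_singleton_iff]
      rw [hroots (t:ℂ)]
      constructor
      · rintro (h | h | h | h)
        · exact Or.inl (by exact_mod_cast h)
        · exact Or.inr (by exact_mod_cast h)
        · exact absurd (congrArg Complex.im h) (by simp [hzim]; positivity)
        · exact absurd (congrArg Complex.im h) (by simp [hzconjim]; positivity)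
      · rintro (rfl | rfl)
        · exact Or.inl rfl
        · exact Or.inr (Or.inl rfl)
    rw [hset]
    exact Set.ncard_pair (by exact_mod_cast hne)
  · ext w
    simp only [Set.mem_setOf_eq, Set.mem_insert_iff, Set.mem_singleton_iff]
    rw [hroots w]
    constructor
    · rintro ⟨h | h | h | h, him⟩
      · exact absurd (h ▸ Complex.ofReal_im r1) him
      · exact absurd (h ▸ Complex.ofReal_im r2) him
      · exact Or.inl h
      · exact Or.inr h
    · rintro (rfl | rfl)
      · exact ⟨Or.inr (Or.inr (Or.inl rfl)), hzimne⟩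
      · exact ⟨Or.inr (Or.inr (Or.inr rfl)), hzconjimne⟩
  · intro w hw hw0
    subst hw0
    rw [hq 0] at hw
    norm_num at hw
    have : (1:ℝ) - k^2 + k^4 = 0 := by exact_mod_cast hw
    nlinarith [posC hk0 hk1]
end
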